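/- Let p : (0,∞)×ℝ → ℝ be measurable with 0 ≤ p ≤ p_∞ for a constant p_∞ > 0, let T > 0, let S : [0,T] → ℝ be continuous and bounded, and let n₀ ∈ L¹(0,∞). For a continuous bounded map n : [0,T] → L¹(0,∞) define Ψ[n](t,s) := n₀(s−t)·exp(−∫₀^t p(τ+s−t, S(τ)) dτ)·1_{{s>t}} + N[n](t−s)·exp(−∫₀^s p(τ, S(t−s+τ)) dτ)·1_{{0<s<t}}, where N[n](t) := ∫₀^∞ p(u, S(t)) n(t,u) du. Then for any two continuous bounded maps n₁, n₂ : [0,T] → L¹(0,∞) and every t ∈ [0,T], ∫₀^∞ |Ψ[n₁](t,s) − Ψ[n₂](t,s)| ds ≤ T·p_∞·sup_{τ∈[0,T]} ‖n₁(τ) − n₂(τ)‖_{L¹(0,∞)}. In particular, if T < 1/p_∞ then Ψ is a strict contraction on the set of continuous bounded maps n : [0,T] → L¹(0,∞) with n(0) = n₀, in the supremum-in-time L¹ norm. -/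

import Mathlib

open MeasureTheory Set Real Filter

/-- The activity `N[n](t) = ∫₀^∞ p(u, S(t)) n(t,u) du`. -/
noncomputable def activity (p : ℝ → ℝ → ℝ) (S : ℝ → ℝ) (n : ℝ → ℝ → ℝ) (t : ℝ) : ℝ :=
  ∫ u in Set.Ioi (0:ℝ), p u (S t) * n t u

/-- The fixed-point operator `Ψ` whose fixed points are the mild solutions of the
renewal equation `∂ₜn + ∂ₛn + p(s,S(t)) n = 0`. -/
noncomputable def Psi (p : ℝ → ℝ → ℝ) (S : ℝ → ℝ) (n₀ : ℝ → ℝ)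
    (n : ℝ → ℝ → ℝ) (t s : ℝ) : ℝ :=
  Set.indicator (Set.Ioi t)
    (fun s' => n₀ (s' - t) * Real.exp (-(∫ τ in (0:ℝ)..t, p (τ + s' - t) (S τ)))) s
  + Set.indicator (Set.Ioo 0 t)
    (fun s' => activity p S n (t - s') *
      Real.exp (-(∫ τ in (0:ℝ)..s', p τ (S (t - s' + τ))))) s

/-- Contraction estimate for the fixed-point operator `Ψ` of the linear renewal
equation: `‖Ψ[n₁](t) - Ψ[n₂](t)‖_{L¹} ≤ T p_∞ sup_{τ∈[0,T]} ‖n₁(τ) - n₂(τ)‖_{L¹}`;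
in particular, `Ψ` is a strict contraction whenever `T < 1/p_∞`. -/
theorem statement1
    (p : ℝ → ℝ → ℝ) (pinf : ℝ) (hpinf : 0 < pinf)
    (hp_meas : Measurable fun q : ℝ × ℝ => p q.1 q.2)
    (hp_nonneg : ∀ s u : ℝ, 0 ≤ p s u)
    (hp_upper : ∀ s u : ℝ, p s u ≤ pinf)
    (T : ℝ) (hT : 0 < T)
    (S : ℝ → ℝ) (hS_cont : ContinuousOn S (Icc 0 T))
    (hS_bdd : ∃ C : ℝ, ∀ t ∈ Icc (0:ℝ) T, |S t| ≤ C)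
    (n₀ : ℝ → ℝ) (hn₀_int : IntegrableOn n₀ (Ioi 0))
    (n₁ n₂ : ℝ → ℝ → ℝ)
    (h₁_int : ∀ t ∈ Icc (0:ℝ) T, IntegrableOn (n₁ t) (Ioi 0))
    (h₂_int : ∀ t ∈ Icc (0:ℝ) T, IntegrableOn (n₂ t) (Ioi 0))
    (h₁_bdd : ∃ C : ℝ, ∀ t ∈ Icc (0:ℝ) T, (∫ s in Ioi (0:ℝ), |n₁ t s|) ≤ C)
    (h₂_bdd : ∃ C : ℝ, ∀ t ∈ Icc (0:ℝ) T, (∫ s in Ioi (0:ℝ), |n₂ t s|) ≤ C)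
    (h₁_cont : ∀ t₀ ∈ Icc (0:ℝ) T, Tendsto (fun t => ∫ s in Ioi (0:ℝ), |n₁ t s - n₁ t₀ s|)
      (nhdsWithin t₀ (Icc 0 T)) (nhds 0))
    (h₂_cont : ∀ t₀ ∈ Icc (0:ℝ) T, Tendsto (fun t => ∫ s in Ioi (0:ℝ), |n₂ t s - n₂ t₀ s|)
      (nhdsWithin t₀ (Icc 0 T)) (nhds 0))
    (B : ℝ) (hB : ∀ τ ∈ Icc (0:ℝ) T, (∫ s in Ioi (0:ℝ), |n₁ τ s - n₂ τ s|) ≤ B) :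
    (∀ t ∈ Icc (0:ℝ) T,
      (∫ s in Ioi (0:ℝ), |Psi p S n₀ n₁ t s - Psi p S n₀ n₂ t s|) ≤ T * pinf * B) ∧
    (T < 1 / pinf →
      ∀ t ∈ Icc (0:ℝ) T,
        (∫ s in Ioi (0:ℝ), |Psi p S n₀ n₁ t s - Psi p S n₀ n₂ t s|) ≤ (T * pinf) * B ∧
        T * pinf < 1) := by
  have hB0 : 0 ≤ B :=
    le_trans (integral_nonneg fun s => abs_nonneg _) (hB 0 ⟨le_refl _, le_of_lt hT⟩)
  have hcB : 0 ≤ pinf * B := mul_nonneg hpinf.le hB0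
  -- activity bound
  have hact : ∀ τ ∈ Icc (0:ℝ) T, |activity p S n₁ τ - activity p S n₂ τ| ≤ pinf * B := by
    intro τ hτ
    have hmeas : Measurable fun u : ℝ => p u (S τ) :=
      hp_meas.comp (measurable_id.prodMk measurable_const)
    have hbd : ∃ C, ∀ u : ℝ, ‖p u (S τ)‖ ≤ C :=
      ⟨pinf, fun u => by rw [Real.norm_eq_abs, abs_of_nonneg (hp_nonneg _ _)]; exact hp_upper _ _⟩
    have hI1 : IntegrableOn (fun u => p u (S τ) * n₁ τ u) (Ioi 0) :=
      (h₁_int τ hτ).bdd_mul hmeas.aestronglyMeasurable (ae_of_all _ hbd.choose_spec)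
    have hI2 : IntegrableOn (fun u => p u (S τ) * n₂ τ u) (Ioi 0) :=
      (h₂_int τ hτ).bdd_mul hmeas.aestronglyMeasurable (ae_of_all _ hbd.choose_spec)
    have hdiff : activity p S n₁ τ - activity p S n₂ τ
        = ∫ u in Ioi (0:ℝ), p u (S τ) * (n₁ τ u - n₂ τ u) := by
      rw [activity, activity, ← integral_sub hI1 hI2]
      congr 1; ext u; ring
    rw [hdiff]
    calc |∫ u in Ioi (0:ℝ), p u (S τ) * (n₁ τ u - n₂ τ u)|
        ≤ ∫ u in Ioi (0:ℝ), |p u (S τ) * (n₁ τ u - n₂ τ u)| := by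
          simpa only [Real.norm_eq_abs] using
            norm_integral_le_integral_norm (μ := volume.restrict (Ioi (0:ℝ)))
              (fun u => p u (S τ) * (n₁ τ u - n₂ τ u))
      _ ≤ ∫ u in Ioi (0:ℝ), pinf * |n₁ τ u - n₂ τ u| := by
          refine integral_mono_of_nonneg (Filter.Eventually.of_forall fun u => abs_nonneg _)
            ((((h₁_int τ hτ).sub (h₂_int τ hτ)).abs).const_mul pinf)
            (Filter.Eventually.of_forall fun u => ?_)
          show |p u (S τ) * (n₁ τ u - n₂ τ u)| ≤ pinf * |n₁ τ u - n₂ τ u|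
          rw [abs_mul]
          exact mul_le_mul_of_nonneg_right
            (by rw [abs_of_nonneg (hp_nonneg _ _)]; exact hp_upper _ _) (abs_nonneg _)
      _ = pinf * ∫ u in Ioi (0:ℝ), |n₁ τ u - n₂ τ u| := integral_const_mul pinf _
      _ ≤ pinf * B := mul_le_mul_of_nonneg_left (hB τ hτ) hpinf.le
  have key : ∀ t ∈ Icc (0:ℝ) T,
      (∫ s in Ioi (0:ℝ), |Psi p S n₀ n₁ t s - Psi p S n₀ n₂ t s|) ≤ T * pinf * B := by
    intro t ht
    have hpt : ∀ s : ℝ, |Psi p S n₀ n₁ t s - Psi p S n₀ n₂ t s|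
        ≤ Set.indicator (Ioo (0:ℝ) t) (fun _ => pinf * B) s := by
      intro s
      by_cases hs : s ∈ Ioo (0:ℝ) t
      · have hτ : t - s ∈ Icc (0:ℝ) T := ⟨by linarith [hs.2], by linarith [hs.1, ht.2]⟩
        have hexp : Real.exp (-(∫ τ in (0:ℝ)..s, p τ (S (t - s + τ)))) ≤ 1 := by
          rw [Real.exp_le_one_iff, neg_nonpos]
          exact intervalIntegral.integral_nonneg hs.1.le fun u _ => hp_nonneg _ _
        have hexp0 : 0 ≤ Real.exp (-(∫ τ in (0:ℝ)..s, p τ (S (t - s + τ)))) :=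
          (Real.exp_pos _).le
        rw [Set.indicator_of_mem hs]
        simp only [Psi, Set.indicator_of_mem hs]
        have : Set.indicator (Set.Ioi t)
            (fun s' => n₀ (s' - t) * Real.exp (-(∫ τ in (0:ℝ)..t, p (τ + s' - t) (S τ)))) s
          + activity p S n₁ (t - s) * Real.exp (-(∫ τ in (0:ℝ)..s, p τ (S (t - s + τ))))
          - (Set.indicator (Set.Ioi t)
            (fun s' => n₀ (s' - t) * Real.exp (-(∫ τ in (0:ℝ)..t, p (τ + s' - t) (S τ)))) s
          + activity p S n₂ (t - s) * Real.exp (-(∫ τ in (0:ℝ)..s, p τ (S (t - s + τ)))))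
          = (activity p S n₁ (t - s) - activity p S n₂ (t - s))
            * Real.exp (-(∫ τ in (0:ℝ)..s, p τ (S (t - s + τ)))) := by ring
        rw [this, abs_mul, abs_of_nonneg hexp0]
        calc |activity p S n₁ (t - s) - activity p S n₂ (t - s)|
              * Real.exp (-(∫ τ in (0:ℝ)..s, p τ (S (t - s + τ))))
            ≤ (pinf * B) * 1 :=
              mul_le_mul (hact _ hτ) hexp hexp0 hcB
          _ = pinf * B := mul_one _
      · rw [Set.indicator_of_notMem hs]
        simp only [Psi, Set.indicator_of_notMem hs]
        simp
    have hgint : Integrable (Set.indicator (Ioo (0:ℝ) t) (fun _ => pinf * B))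
        (volume.restrict (Ioi (0:ℝ))) := by
      rw [integrable_indicator_iff measurableSet_Ioo]
      exact (integrableOn_const_iff enorm_ne_top).mpr (Or.inr
        ((Measure.restrict_apply_le _ _).trans_lt measure_Ioo_lt_top))
    have h1 : (∫ s in Ioi (0:ℝ), |Psi p S n₀ n₁ t s - Psi p S n₀ n₂ t s|)
        ≤ ∫ s in Ioi (0:ℝ), Set.indicator (Ioo (0:ℝ) t) (fun _ => pinf * B) s :=
      integral_mono_of_nonneg (Filter.Eventually.of_forall fun s => abs_nonneg _) hgint
        (Filter.Eventually.of_forall hpt)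
    refine h1.trans ?_
    rw [integral_indicator measurableSet_Ioo, setIntegral_const, measureReal_def,
      Measure.restrict_apply measurableSet_Ioo,
      Set.inter_eq_self_of_subset_left Set.Ioo_subset_Ioi_self,
      Real.volume_Ioo]
    rw [sub_zero, ENNReal.toReal_ofReal ht.1, smul_eq_mul]
    calc t * (pinf * B) ≤ T * (pinf * B) := mul_le_mul_of_nonneg_right ht.2 hcB
      _ = T * pinf * B := by ring
  refine ⟨key, fun hTc => fun t ht => ⟨key t ht, (lt_div_iff₀ hpinf).mp hTc⟩⟩
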